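/- Let G = (V,A) be a digraph with root r, nonnegative arc costs c and nonnegative node penalties π. For each non-root node v choose θ_v ≥ 0 with θ_v ≤ min{min over arcs (u,v) of c_{uv}, π_v}, and set c̃_{uv} = c_{uv} − θ_v, π̃_v = π_v − θ_v. Then the optimal prize-collecting cost over collections of r-rooted walks for instance (G,c̃,π̃) is at most the optimal prize-collecting cost for (G,c,π) minus Σ_{v≠r} θ_v. -/

import Mathlib

open Finset

/-- Cost of a walk given by its vertex sequence. -/
def walkCost {V : Type*} (c : V → V → ℝ) (P : List V) : ℝ :=
  ((P.zip P.tail).map fun q => c q.1 q.2).sum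

/-- A walk rooted at `r` in the digraph with arc set `A`. -/
def IsWalk {V : Type*} (A : Finset (V × V)) (r : V) (P : List V) : Prop :=
  P.head? = some r ∧ P.Chain' (fun u v => (u, v) ∈ A)

/-- Minimum prize-collecting cost over collections of `r`-rooted walks. -/
noncomputable def pcwOpt {V : Type*} [Fintype V] [DecidableEq V]
    (A : Finset (V × V)) (c : V → V → ℝ) (π : V → ℝ) (r : V) : ℝ :=
  sInf {z : ℝ | ∃ C : List (List V), (∀ P ∈ C, IsWalk A r P) ∧
    z = (C.map (walkCost c)).sum +
      ∑ v ∈ Finset.univ.filter (fun v => ∀ P ∈ C, v ∉ P), π v}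

lemma list_sum_map_sub {α : Type*} (f g : α → ℝ) (l : List α) :
    (l.map fun x => f x - g x).sum = (l.map f).sum - (l.map g).sum := by
  induction l with
  | nil => simp
  | cons a t ih => simp [ih]; ring

lemma walkCost_shift {V : Type*} (c : V → V → ℝ) (θ : V → ℝ) (P : List V) :
    walkCost (fun u v => c u v - θ v) P = walkCost c P - (P.tail.map θ).sum := by
  unfold walkCost
  rw [show (List.map (fun q : V × V => c q.1 q.2 - θ q.2) (P.zip P.tail)).sum =
      (List.map (fun q : V × V => c q.1 q.2) (P.zip P.tail)).sum -
        (List.map (fun q : V × V => θ q.2) (P.zip P.tail)).sum from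
    list_sum_map_sub _ _ _]
  congr 1
  have h : (P.zip P.tail).map Prod.snd = P.tail :=
    List.map_snd_zip (by cases P <;> simp)
  conv_rhs => rw [← h, List.map_map]
  rfl

lemma walkCost_nonneg {V : Type*} (A : Finset (V × V)) (c : V → V → ℝ)
    (hc : ∀ u v, (u, v) ∈ A → 0 ≤ c u v) :
    ∀ P : List V, P.Chain' (fun u v => (u, v) ∈ A) → 0 ≤ walkCost c P := by
  intro P
  induction P with
  | nil => intro _; simp [walkCost]
  | cons a t ih =>
    intro h
    cases t with
    | nil => simp [walkCost]
    | cons b t' =>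
      unfold List.Chain' at h; rw [List.isChain_cons_cons] at h
      have h1 := ih h.2
      have h2 := hc a b h.1
      simp only [walkCost, List.tail_cons, List.zip_cons_cons, List.map_cons, List.sum_cons] at *
      linarith

lemma toFinset_sum_le {V : Type*} [DecidableEq V] (θ : V → ℝ) (hθ : ∀ v, 0 ≤ θ v)
    (l : List V) : ∑ v ∈ l.toFinset, θ v ≤ (l.map θ).sum := by
  induction l with
  | nil => simp
  | cons a t ih =>
    simp only [List.toFinset_cons, List.map_cons, List.sum_cons]
    by_cases h : a ∈ t.toFinset
    · rw [Finset.insert_eq_self.mpr h]; linarith [hθ a]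
    · rw [Finset.sum_insert h]; linarith

lemma covered_sum_le {V : Type*} [DecidableEq V] (θ : V → ℝ) (hθ : ∀ v, 0 ≤ θ v) :
    ∀ (C : List (List V)) (S : Finset V), (∀ v ∈ S, ∃ P ∈ C, v ∈ P.tail) →
      ∑ v ∈ S, θ v ≤ (C.map fun P => (P.tail.map θ).sum).sum := by
  intro C
  induction C with
  | nil =>
    intro S hS
    have : S = ∅ := Finset.eq_empty_of_forall_notMem fun v hv => by
      obtain ⟨P, hP, _⟩ := hS v hv; simp at hP
    simp [this]
  | cons P C ih =>
    intro S hS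
    have hsplit := (Finset.sum_filter_add_sum_filter_not S (fun v => v ∈ P.tail) θ).symm
    rw [hsplit, List.map_cons, List.sum_cons]
    have h1 : ∑ v ∈ S.filter (fun v => v ∈ P.tail), θ v ≤ (P.tail.map θ).sum := by
      refine le_trans ?_ (toFinset_sum_le θ hθ P.tail)
      refine Finset.sum_le_sum_of_subset_of_nonneg ?_ (fun v _ _ => hθ v)
      intro v hv
      simp only [Finset.mem_filter] at hv
      exact List.mem_toFinset.mpr hv.2
    have h2 : ∑ v ∈ S.filter (fun v => ¬ v ∈ P.tail), θ v ≤
        (C.map fun P => (P.tail.map θ).sum).sum := by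
      apply ih
      intro v hv
      simp only [Finset.mem_filter] at hv
      obtain ⟨Q, hQ, hvQ⟩ := hS v hv.1
      rcases List.mem_cons.mp hQ with rfl | hQ'
      · exact absurd hvQ hv.2
      · exact ⟨Q, hQ', hvQ⟩
    linarith

theorem pcwOpt_shift
    {V : Type*} [Fintype V] [DecidableEq V]
    (A : Finset (V × V)) (r : V) (c : V → V → ℝ) (π θ : V → ℝ)
    (hc : ∀ u v, 0 ≤ c u v) (hπ : ∀ v, 0 ≤ π v)
    (hθ0 : ∀ v, 0 ≤ θ v) (hθr : θ r = 0)
    (hθc : ∀ u v, v ≠ r → (u, v) ∈ A → θ v ≤ c u v)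
    (hθπ : ∀ v, v ≠ r → θ v ≤ π v) :
    pcwOpt A (fun u v => c u v - θ v) (fun v => π v - θ v) r ≤
      pcwOpt A c π r - ∑ v ∈ Finset.univ.erase r, θ v := by
  have hc' : ∀ u v, (u, v) ∈ A → 0 ≤ c u v - θ v := by
    intro u v huv
    by_cases hv : v = r
    · subst hv; rw [hθr]; linarith [hc u v]
    · linarith [hθc u v hv huv]
  -- the shifted feasible set is bounded below by 0
  have hbdd : BddBelow {z : ℝ | ∃ C : List (List V), (∀ P ∈ C, IsWalk A r P) ∧
      z = (C.map (walkCost fun u v => c u v - θ v)).sum +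
        ∑ v ∈ Finset.univ.filter (fun v => ∀ P ∈ C, v ∉ P), (π v - θ v)} := by
    refine ⟨0, ?_⟩
    rintro x ⟨C, hC, rfl⟩
    have h1 : 0 ≤ (C.map (walkCost fun u v => c u v - θ v)).sum := by
      apply List.sum_nonneg
      intro x hx
      obtain ⟨P, hP, rfl⟩ := List.mem_map.mp hx
      exact walkCost_nonneg A _ hc' P (hC P hP).2
    have h2 : 0 ≤ ∑ v ∈ Finset.univ.filter (fun v => ∀ P ∈ C, v ∉ P), (π v - θ v) := by
      apply Finset.sum_nonneg
      intro v _
      by_cases hv : v = r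
      · subst hv; rw [hθr]; linarith [hπ v]
      · linarith [hθπ v hv]
    linarith
  rw [pcwOpt, pcwOpt, le_sub_iff_add_le]
  apply le_csInf
  · exact ⟨(List.map (walkCost c) ([] : List (List V))).sum +
      ∑ v ∈ Finset.univ.filter (fun v => ∀ P ∈ ([] : List (List V)), v ∉ P), π v,
      ⟨[], by simp, rfl⟩⟩
  rintro z ⟨C, hC, rfl⟩
  set U := Finset.univ.filter (fun v => ∀ P ∈ C, v ∉ P) with hU
  have hmem : (C.map (walkCost fun u v => c u v - θ v)).sum + ∑ v ∈ U, (π v - θ v) ∈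
      {z : ℝ | ∃ C : List (List V), (∀ P ∈ C, IsWalk A r P) ∧
      z = (C.map (walkCost fun u v => c u v - θ v)).sum +
        ∑ v ∈ Finset.univ.filter (fun v => ∀ P ∈ C, v ∉ P), (π v - θ v)} :=
    ⟨C, hC, rfl⟩
  have hle := csInf_le hbdd hmem
  -- rewrite shifted walk costs
  have hmap : C.map (walkCost fun u v => c u v - θ v) =
      C.map (fun P => walkCost c P - (P.tail.map θ).sum) := by
    apply List.map_congr_left
    intro P _
    exact walkCost_shift c θ P
  have hcost : (C.map (walkCost fun u v => c u v - θ v)).sum =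
      (C.map (walkCost c)).sum - (C.map fun P => (P.tail.map θ).sum).sum := by
    rw [hmap, list_sum_map_sub]
  have hpen : ∑ v ∈ U, (π v - θ v) = ∑ v ∈ U, π v - ∑ v ∈ U, θ v :=
    Finset.sum_sub_distrib _ _
  -- the key combinatorial inequality
  have hkey : ∑ v ∈ Finset.univ.erase r, θ v ≤
      (C.map fun P => (P.tail.map θ).sum).sum + ∑ v ∈ U, θ v := by
    have hsplit := (Finset.sum_filter_add_sum_filter_not (Finset.univ.erase r)
      (fun v => v ∈ U) θ).symm
    rw [hsplit]
    have h1 : ∑ v ∈ (Finset.univ.erase r).filter (fun v => v ∈ U), θ v ≤ ∑ v ∈ U, θ v := by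
      refine Finset.sum_le_sum_of_subset_of_nonneg ?_ (fun v _ _ => hθ0 v)
      intro v hv
      exact (Finset.mem_filter.mp hv).2
    have h2 : ∑ v ∈ (Finset.univ.erase r).filter (fun v => ¬ v ∈ U), θ v ≤
        (C.map fun P => (P.tail.map θ).sum).sum := by
      apply covered_sum_le θ hθ0
      intro v hv
      rw [Finset.mem_filter, Finset.mem_erase] at hv
      obtain ⟨⟨hvr, _⟩, hvU⟩ := hv
      rw [hU, Finset.mem_filter] at hvU
      push_neg at hvU
      obtain ⟨P, hP, hvP⟩ := hvU (Finset.mem_univ v)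
      refine ⟨P, hP, ?_⟩
      have hw := (hC P hP).1
      cases P with
      | nil => simp at hw
      | cons a t =>
        simp only [List.head?_cons, Option.some.injEq] at hw
        subst hw
        rcases List.mem_cons.mp hvP with h | h
        · exact absurd h hvr
        · exact h
    linarith
  rw [hcost, hpen] at hle
  linarith
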